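/- Let A be an associative unital ℝ-algebra, n a real number, and d, δ, x, y, Δ, Q, N elements of A satisfying Q·d − d·Q = −2x, Q·δ − δ·Q = 2y, Q·x = x·Q, Q·y = y·Q, N·Q − Q·N = 2Q, and Q·Δ − Δ·Q = 2·(2N + (n+2)·1). Define εD := d·(n·1 + 2N − 2·1) + x·Δ and ιD := −δ·(n·1 + 2N − 2·1) + y·Δ. Then Q·εD − εD·Q = −4·Q·d and Q·ιD − ιD·Q = 4·Q·δ; equivalently, εD·Q = Q·(εD + 4d) and ιD·Q = Q·(ιD − 4δ), so that in any A-module M the operators εD and ιD map the subset Q·M into itself. -/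
import Mathlib


/-- The operator `ε(𝔻) = d̃(n + 2∇_𝕏 − 2) + ε(𝕏)Δ̃` of Branson–Gover, modelled in
an abstract associative `ℝ`-algebra. -/
def epsD {A : Type*} [Ring A] [Algebra ℝ A] (n : ℝ) (d x Δ N : A) : A :=
  d * (n • (1 : A) + (2 : ℝ) • N - (2 : ℝ) • (1 : A)) + x * Δ

/-- The operator `ι(𝔻) = −δ̃(n + 2∇_𝕏 − 2) + ι(𝕏)Δ̃` of Branson–Gover, modelled in
an abstract associative `ℝ`-algebra. -/
def iotaD {A : Type*} [Ring A] [Algebra ℝ A] (n : ℝ) (δ y Δ N : A) : A :=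
  -(δ * (n • (1 : A) + (2 : ℝ) • N - (2 : ℝ) • (1 : A))) + y * Δ

/-- Algebraic content of Proposition 3.2 of Branson–Gover: `ε(𝔻)` and `ι(𝔻)`
act tangentially along `𝒬`, via `[Q, ε(𝔻)] = −4 Q d̃` and `[Q, ι(𝔻)] = 4 Q δ̃`;
equivalently `ε(𝔻) Q = Q(ε(𝔻) + 4d̃)` and `ι(𝔻) Q = Q(ι(𝔻) − 4δ̃)`, so that in
any module the operators `ε(𝔻)`, `ι(𝔻)` preserve the subset `Q·M`. -/
theorem stmt_11
    {A : Type*} [Ring A] [Algebra ℝ A]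
    (n : ℝ) (d δ x y Δ Q N : A)
    (h₁ : Q * d - d * Q = -((2 : ℝ) • x))
    (h₂ : Q * δ - δ * Q = (2 : ℝ) • y)
    (h₃ : Q * x = x * Q)
    (h₄ : Q * y = y * Q)
    (h₅ : N * Q - Q * N = (2 : ℝ) • Q)
    (h₆ : Q * Δ - Δ * Q = (2 : ℝ) • ((2 : ℝ) • N + (n + 2) • (1 : A))) :
    Q * epsD n d x Δ N - epsD n d x Δ N * Q = -((4 : ℝ) • (Q * d)) ∧
    Q * iotaD n δ y Δ N - iotaD n δ y Δ N * Q = (4 : ℝ) • (Q * δ) ∧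
    epsD n d x Δ N * Q = Q * (epsD n d x Δ N + (4 : ℝ) • d) ∧
    iotaD n δ y Δ N * Q = Q * (iotaD n δ y Δ N - (4 : ℝ) • δ) ∧
    (∀ (M : Type*) [AddCommGroup M] [Module A M] (m : M),
      (∃ m' : M, epsD n d x Δ N • (Q • m) = Q • m') ∧
      (∃ m'' : M, iotaD n δ y Δ N • (Q • m) = Q • m'')) := by

  have key1 : Q * epsD n d x Δ N - epsD n d x Δ N * Q = -((4 : ℝ) • (Q * d)) := by
    unfold epsD
    linear_combination (norm := (noncomm_ring; module))
      h₁ * (n • (1 : A) + (2 : ℝ) • N - (2 : ℝ) • (1 : A)) - (2:ℝ) • (d * h₅)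
      + h₃ * Δ + x * h₆ + (4:ℝ) • h₁
  have key2 : Q * iotaD n δ y Δ N - iotaD n δ y Δ N * Q = (4 : ℝ) • (Q * δ) := by
    unfold iotaD
    linear_combination (norm := (noncomm_ring; module))
      - (h₂ * (n • (1 : A) + (2 : ℝ) • N - (2 : ℝ) • (1 : A))) + (2:ℝ) • (δ * h₅)
      + h₄ * Δ + y * h₆ - (4:ℝ) • h₂
  have key3 : epsD n d x Δ N * Q = Q * (epsD n d x Δ N + (4 : ℝ) • d) := by
    linear_combination (norm := noncomm_ring) -key1
  have key4 : iotaD n δ y Δ N * Q = Q * (iotaD n δ y Δ N - (4 : ℝ) • δ) := by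
    linear_combination (norm := noncomm_ring) -key2
  refine ⟨key1, key2, key3, key4, fun M _ _ m => ⟨⟨(epsD n d x Δ N + (4 : ℝ) • d) • m, ?_⟩,
    ⟨(iotaD n δ y Δ N - (4 : ℝ) • δ) • m, ?_⟩⟩⟩
  · rw [← mul_smul, key3, mul_smul]
  · rw [← mul_smul, key4, mul_smul]
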